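/- Let H be a bipartite multigraph with parts X = {x_1,...,x_k} and Z = {z_1,...,z_n}, encoded by its bipartite adjacency matrix A where a_{ij} is the number of parallel edges joining x_i and z_j, and let d_i = a_{i1} + ... + a_{in} be the degree of x_i. Suppose H admits a sequential coloring for X, i.e., there are finite sets S_{ij} ⊆ {1,2,3,...} with |S_{ij}| = a_{ij} such that for each fixed j the sets S_{1j},...,S_{kj} are pairwise disjoint and for each fixed i the sets S_{i1},...,S_{in} are pairwise disjoint with union exactly {1,...,d_i}. Then for every assignment of finite sets L_1,...,L_k ⊆ {1,2,3,...} with |L_i| = d_i, there are finite sets T_{ij} ⊆ L_i with |T_{ij}| = a_{ij} such that for each fixed i the sets T_{i1},...,T_{in} are pairwise disjoint and for each fixed j the sets T_{1j},...,T_{kj} are pairwise disjoint. -/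

import Mathlib

open Finset

/-- The degree in the bipartite edge set `E` of a vertex `x` of the part `X = Fin k`. -/
def Xdeg {k m : ℕ} (E : Finset (Fin k × Fin m)) (x : Fin k) : ℕ :=
  (E.filter fun e => e.1 = x).card

/-- The degree in the bipartite edge set `E` of a vertex `y` of the part `Y = Fin m`. -/
def Ydeg {k m : ℕ} (E : Finset (Fin k × Fin m)) (y : Fin m) : ℕ :=
  (E.filter fun e => e.2 = y).card

/-- A star forest with centers in `X`: every vertex of `Y` has degree at most one. -/
def IsStarForest {k m : ℕ} (F : Finset (Fin k × Fin m)) : Prop :=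
  ∀ y : Fin m, Ydeg F y ≤ 1

/-- The simple graph on the vertex set `Fin k ⊕ Fin m` determined by a set of
bipartite edges. -/
def toGraph {k m : ℕ} (F : Finset (Fin k × Fin m)) : SimpleGraph (Fin k ⊕ Fin m) where
  Adj u v := (∃ x y, u = Sum.inl x ∧ v = Sum.inr y ∧ (x, y) ∈ F) ∨
             (∃ x y, v = Sum.inl x ∧ u = Sum.inr y ∧ (x, y) ∈ F)
  symm := ⟨fun _ _ h => Or.symm h⟩
  loopless := by
    exact ⟨by rintro u (⟨x, y, rfl, h, -⟩ | ⟨x, y, rfl, h, -⟩) <;> exact Sum.inl_ne_inr h⟩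

/-- `F` is isomorphic to a subgraph of `F'`: there is an injective map of vertices
carrying edges to edges. -/
def IsoToSubgraph {k m k' m' : ℕ} (F : Finset (Fin k × Fin m))
    (F' : Finset (Fin k' × Fin m')) : Prop :=
  ∃ f : Fin k ⊕ Fin m → Fin k' ⊕ Fin m',
    Function.Injective f ∧ ∀ u v, (toGraph F).Adj u v → (toGraph F').Adj (f u) (f v)

/-- `c ⪯ c'` : after reordering the components of each vector in nondecreasing order,
each component of `c` is at most the corresponding component of `c'`. -/
def Prec {k : ℕ} (c c' : Fin k → ℕ) : Prop :=
  ∀ i : Fin k, c (Tuple.sort c i) ≤ c' (Tuple.sort c' i)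

/-- A star-forest ascending subgraph decomposition of the edge set `E`:
the `F i` partition `E`, `F i` has `i + 1` edges (`1`-based: `i` edges),
every `F i` is a star forest with centers in `X`, and each `F i` is isomorphic
to a subgraph of the next one. -/
def StarForestASD {k m n : ℕ} (E : Finset (Fin k × Fin m))
    (F : Fin n → Finset (Fin k × Fin m)) : Prop :=
  (∀ i j, i ≠ j → Disjoint (F i) (F j)) ∧
  Finset.univ.biUnion F = E ∧
  (∀ i, (F i).card = (i : ℕ) + 1) ∧
  (∀ i, IsStarForest (F i)) ∧
  ∀ j : ℕ, (h : j + 1 < n) → IsoToSubgraph (F ⟨j, Nat.lt_of_succ_lt h⟩) (F ⟨j + 1, h⟩)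

/-- The reduced bipartite graph with (1-based) degree sequence `d 1 ≤ ⋯ ≤ d k`:
`x i` is adjacent exactly to `y 1, …, y (d i)`. -/
def reducedEdges (k : ℕ) (d : ℕ → ℕ) : Finset (Fin k × Fin (d k)) :=
  Finset.univ.filter fun e => (e.2 : ℕ) + 1 ≤ d ((e.1 : ℕ) + 1)

/-- The columns of `A` satisfy `A_1 ⪯ A_2 ⪯ ⋯ ⪯ A_n`. -/
def AscendingCols {k n : ℕ} (A : Matrix (Fin k) (Fin n) ℕ) : Prop :=
  ∀ j : ℕ, (h : j + 1 < n) →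
    Prec (fun i => A i ⟨j, Nat.lt_of_succ_lt h⟩) (fun i => A i ⟨j + 1, h⟩)

/-- A sequential coloring of the bipartite multigraph encoded by the matrix `A`:
the parallel edge class joining `x i` and `z j` receives the set `S i j` of colors,
the coloring is proper, and the edges at `x i` receive exactly colors `{1, …, d i}`. -/
def SeqColoring {k n : ℕ} (A : Matrix (Fin k) (Fin n) ℕ) (d : Fin k → ℕ)
    (S : Fin k → Fin n → Finset ℕ) : Prop :=
  (∀ i j, (S i j).card = A i j) ∧
  (∀ j : Fin n, ∀ i i' : Fin k, i ≠ i' → Disjoint (S i j) (S i' j)) ∧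
  (∀ i : Fin k, ∀ j j' : Fin n, j ≠ j' → Disjoint (S i j) (S i j')) ∧
  (∀ i : Fin k, Finset.univ.biUnion (fun j => S i j) = Finset.Icc 1 (d i))

private lemma exists_gap {Λ : Finset ℕ} (h0 : 0 ∉ Λ) (hne : Λ ≠ Finset.Icc 1 Λ.card) :
    ∃ v ∈ Λ, 2 ≤ v ∧ v - 1 ∉ Λ := by
  by_contra hcon
  push_neg at hcon
  have hlow : ∀ v, v ∈ Λ → ∀ m, 1 ≤ m → m ≤ v → m ∈ Λ := by
    intro v
    induction v using Nat.strong_induction_on with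
    | _ v ih =>
      intro hv m h1 hm
      rcases eq_or_lt_of_le hm with rfl | hlt
      · exact hv
      · have h2 : 2 ≤ v := by omega
        have hv1 : v - 1 ∈ Λ := hcon v hv h2
        exact ih (v - 1) (by omega) hv1 m h1 (by omega)
  have hsub : Λ ⊆ Finset.Icc 1 Λ.card := by
    intro v hv
    have h1 : 1 ≤ v := by
      rcases Nat.eq_zero_or_pos v with rfl | h
      · exact absurd hv h0
      · omega
    have hsub2 : Finset.Icc 1 v ⊆ Λ := by
      intro m hm
      rw [Finset.mem_Icc] at hm
      exact hlow v hv m hm.1 hm.2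
    have := Finset.card_le_card hsub2
    rw [Nat.card_Icc] at this
    rw [Finset.mem_Icc]
    omega
  exact hne (Finset.eq_of_subset_of_card_le hsub (by rw [Nat.card_Icc]; omega))

private lemma multi_raise {k n : ℕ} {A : Matrix (Fin k) (Fin n) ℕ}
    {L : Fin k → Finset ℕ} {T : Fin k → Fin n → Finset ℕ} {u p : ℕ} {R : Finset (Fin k)}
    (hup : u ≠ p)
    (hsub : ∀ i j, T i j ⊆ L i) (hcard : ∀ i j, (T i j).card = A i j)
    (hrow : ∀ i : Fin k, ∀ j j' : Fin n, j ≠ j' → Disjoint (T i j) (T i j'))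
    (hcol : ∀ j : Fin n, ∀ i i' : Fin k, i ≠ i' → Disjoint (T i j) (T i' j))
    (hRp : ∀ i ∈ R, p ∈ L i) (hRu : ∀ i ∈ R, u ∉ L i)
    (hCH : ∀ i, i ∉ R → u ∈ L i → p ∈ L i) :
    ∃ T' : Fin k → Fin n → Finset ℕ,
      (∀ i j, T' i j ⊆ (if i ∈ R then insert u ((L i).erase p) else L i)) ∧
      (∀ i j, (T' i j).card = A i j) ∧
      (∀ i : Fin k, ∀ j j' : Fin n, j ≠ j' → Disjoint (T' i j) (T' i j')) ∧
      (∀ j : Fin n, ∀ i i' : Fin k, i ≠ i' → Disjoint (T' i j) (T' i' j)) := by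
  classical
  have rowuniq : ∀ {i : Fin k} {j j' : Fin n} {v : ℕ}, v ∈ T i j → v ∈ T i j' → j = j' := by
    intro i j j' v h h'
    by_contra hne
    exact (Finset.disjoint_left.1 (hrow i j j' hne) h) h'
  have coluniq : ∀ {j : Fin n} {i i' : Fin k} {v : ℕ}, v ∈ T i j → v ∈ T i' j → i = i' := by
    intro j i i' v h h'
    by_contra hne
    exact (Finset.disjoint_left.1 (hcol j i i' hne) h) h'
  set Step : Fin k → Fin k → Prop := fun x y => ∃ j, p ∈ T x j ∧ u ∈ T y j with hStep
  set Sig : Fin k → Prop := fun r => ∃ i ∈ R, Relation.TransGen Step i r with hSig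
  have stepInj : ∀ {x x' y : Fin k}, Step x y → Step x' y → x = x' := by
    rintro x x' y ⟨j, hpj, huj⟩ ⟨j', hpj', huj'⟩
    have hjj : j = j' := rowuniq huj huj'
    subst hjj
    exact coluniq hpj hpj'
  have sigPred : ∀ {r : Fin k}, Sig r → ∃ z, (z ∈ R ∨ Sig z) ∧ Step z r := by
    rintro r ⟨i, hiR, htg⟩
    induction htg with
    | single h => exact ⟨i, Or.inl hiR, h⟩
    | tail htg' hstep _ => exact ⟨_, Or.inr ⟨i, hiR, htg'⟩, hstep⟩
  have sigClose : ∀ {x y : Fin k}, (x ∈ R ∨ Sig x) → Step x y → Sig y := by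
    rintro x y (hx | ⟨i, hiR, htg⟩) hs
    · exact ⟨x, hx, Relation.TransGen.single hs⟩
    · exact ⟨i, hiR, htg.tail hs⟩
  have sigU : ∀ {r : Fin k}, Sig r → u ∈ L r := by
    intro r hr
    obtain ⟨z, _, j, _, huj⟩ := sigPred hr
    exact hsub r j huj
  have sigNotR : ∀ {r : Fin k}, Sig r → r ∉ R := fun hr hrR => hRu _ hrR (sigU hr)
  have sigP : ∀ {r : Fin k}, Sig r → p ∈ L r := fun hr => hCH _ (sigNotR hr) (sigU hr)
  set s : ℕ → ℕ := fun x => if x = u then p else if x = p then u else x with hs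
  have hsu : s u = p := by simp only [hs, if_pos rfl]
  have hsp : s p = u := by
    simp [hs, Ne.symm hup]
  have hso : ∀ x, x ≠ u → x ≠ p → s x = x := by
    intro x h1 h2
    simp [hs, h1, h2]
  have s_invol : ∀ x, s (s x) = x := by
    intro x
    by_cases h1 : x = u
    · subst h1; rw [hsu, hsp]
    · by_cases h2 : x = p
      · subst h2; rw [hsp, hsu]
      · rw [hso x h1 h2, hso x h1 h2]
  have s_inj : Function.Injective s := Function.Involutive.injective s_invol
  have mem_image_s : ∀ (w : ℕ) (X : Finset ℕ), w ∈ X.image s ↔ s w ∈ X := by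
    intro w X
    constructor
    · intro hw
      rcases Finset.mem_image.1 hw with ⟨x, hx, hxw⟩
      rw [← hxw, s_invol]
      exact hx
    · intro h
      exact Finset.mem_image.2 ⟨s w, h, s_invol w⟩
  set T' : Fin k → Fin n → Finset ℕ := fun i j =>
    if i ∈ R then (if p ∈ T i j then insert u ((T i j).erase p) else T i j)
    else if Sig i then (T i j).image s else T i j with hT'
  have memU : ∀ i j, u ∈ T' i j ↔
      (((i ∈ R ∨ Sig i) ∧ p ∈ T i j) ∨ (¬(i ∈ R ∨ Sig i) ∧ u ∈ T i j)) := by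
    intro i j
    by_cases hiR : i ∈ R
    · have hnot : ¬ Sig i := fun h => sigNotR h hiR
      have hu : u ∉ T i j := fun h => hRu i hiR (hsub i j h)
      by_cases hp : p ∈ T i j
      · simp only [hT', if_pos hiR, if_pos hp]
        simp [hiR, hp]
      · simp only [hT', if_pos hiR, if_neg hp]
        simp [hiR, hp, hu, hnot]
    · by_cases hsig : Sig i
      · simp only [hT', if_neg hiR, if_pos hsig, mem_image_s, hsu]
        simp [hiR, hsig]
      · simp only [hT', if_neg hiR, if_neg hsig]
        simp [hiR, hsig]
  have memP : ∀ i j, p ∈ T' i j ↔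
      ((Sig i ∧ u ∈ T i j) ∨ (¬(i ∈ R ∨ Sig i) ∧ p ∈ T i j)) := by
    intro i j
    by_cases hiR : i ∈ R
    · have hnot : ¬ Sig i := fun h => sigNotR h hiR
      by_cases hp : p ∈ T i j
      · simp only [hT', if_pos hiR, if_pos hp]
        simp [hiR, hp, hnot, hup.symm]
      · simp only [hT', if_pos hiR, if_neg hp]
        simp [hiR, hp, hnot]
    · by_cases hsig : Sig i
      · simp only [hT', if_neg hiR, if_pos hsig, mem_image_s, hsp]
        simp [hiR, hsig]
      · simp only [hT', if_neg hiR, if_neg hsig]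
        simp [hiR, hsig]
  have memO : ∀ (w : ℕ), w ≠ u → w ≠ p → ∀ i j, (w ∈ T' i j ↔ w ∈ T i j) := by
    intro w hwu hwp i j
    by_cases hiR : i ∈ R
    · by_cases hp : p ∈ T i j
      · simp only [hT', if_pos hiR, if_pos hp, Finset.mem_insert, Finset.mem_erase]
        simp [hwu, hwp]
      · simp only [hT', if_pos hiR, if_neg hp]
    · by_cases hsig : Sig i
      · simp only [hT', if_neg hiR, if_pos hsig, mem_image_s, hso w hwu hwp]
      · simp only [hT', if_neg hiR, if_neg hsig]
  refine ⟨T', ?_, ?_, ?_, ?_⟩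
  · -- subset
    intro i j w hw
    by_cases hwu : w = u
    · subst hwu
      by_cases hiR : i ∈ R
      · rw [if_pos hiR]
        exact Finset.mem_insert_self _ _
      · rw [if_neg hiR]
        rcases (memU i j).1 hw with ⟨hor, _⟩ | ⟨_, hu⟩
        · rcases hor with h | h
          · exact absurd h hiR
          · exact sigU h
        · exact hsub i j hu
    · by_cases hwp : w = p
      · subst hwp
        rcases (memP i j).1 hw with ⟨hsig, _⟩ | ⟨hnor, hp⟩
        · rw [if_neg (sigNotR hsig)]
          exact sigP hsig
        · rw [if_neg (fun h => hnor (Or.inl h))]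
          exact hsub i j hp
      · have hwT : w ∈ T i j := (memO w hwu hwp i j).1 hw
        by_cases hiR : i ∈ R
        · rw [if_pos hiR]
          exact Finset.mem_insert_of_mem (Finset.mem_erase.2 ⟨hwp, hsub i j hwT⟩)
        · rw [if_neg hiR]
          exact hsub i j hwT
  · -- cards
    intro i j
    by_cases hiR : i ∈ R
    · by_cases hp : p ∈ T i j
      · simp only [hT', if_pos hiR, if_pos hp]
        have hu : u ∉ (T i j).erase p := fun h => hRu i hiR (hsub i j (Finset.mem_of_mem_erase h))
        rw [Finset.card_insert_of_notMem hu, Finset.card_erase_of_mem hp]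
        have h1 : 1 ≤ (T i j).card := Finset.card_pos.2 ⟨p, hp⟩
        have h2 := hcard i j
        omega
      · simp only [hT', if_pos hiR, if_neg hp]
        exact hcard i j
    · by_cases hsig : Sig i
      · simp only [hT', if_neg hiR, if_pos hsig]
        rw [Finset.card_image_of_injective _ s_inj]
        exact hcard i j
      · simp only [hT', if_neg hiR, if_neg hsig]
        exact hcard i j
  · -- row disjoint
    intro i j j' hjj'
    rw [Finset.disjoint_left]
    intro w hw hw'
    by_cases hwu : w = u
    · subst hwu
      rcases (memU i j).1 hw with ⟨h1, hp1⟩ | ⟨h1, hu1⟩ <;>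
        rcases (memU i j').1 hw' with ⟨h2, hp2⟩ | ⟨h2, hu2⟩
      · exact hjj' (rowuniq hp1 hp2)
      · exact h2 h1
      · exact h1 h2
      · exact hjj' (rowuniq hu1 hu2)
    · by_cases hwp : w = p
      · subst hwp
        rcases (memP i j).1 hw with ⟨h1, hu1⟩ | ⟨h1, hp1⟩ <;>
          rcases (memP i j').1 hw' with ⟨h2, hu2⟩ | ⟨h2, hp2⟩
        · exact hjj' (rowuniq hu1 hu2)
        · exact h2 (Or.inr h1)
        · exact h1 (Or.inr h2)
        · exact hjj' (rowuniq hp1 hp2)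
      · exact (Finset.disjoint_left.1 (hrow i j j' hjj') ((memO w hwu hwp i j).1 hw))
          ((memO w hwu hwp i j').1 hw')
  · -- col disjoint
    intro j i i' hii'
    rw [Finset.disjoint_left]
    intro w hw hw'
    by_cases hwu : w = u
    · subst hwu
      rcases (memU i j).1 hw with ⟨h1, hp1⟩ | ⟨h1, hu1⟩ <;>
        rcases (memU i' j).1 hw' with ⟨h2, hp2⟩ | ⟨h2, hu2⟩
      · exact hii' (coluniq hp1 hp2)
      · exact h2 (Or.inr (sigClose h1 ⟨j, hp1, hu2⟩))
      · exact h1 (Or.inr (sigClose h2 ⟨j, hp2, hu1⟩))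
      · exact hii' (coluniq hu1 hu2)
    · by_cases hwp : w = p
      · subst hwp
        rcases (memP i j).1 hw with ⟨h1, hu1⟩ | ⟨h1, hp1⟩ <;>
          rcases (memP i' j).1 hw' with ⟨h2, hu2⟩ | ⟨h2, hp2⟩
        · exact hii' (coluniq hu1 hu2)
        · obtain ⟨z, hz, hstep⟩ := sigPred h1
          exact h2 ((stepInj ⟨j, hp2, hu1⟩ hstep) ▸ hz)
        · obtain ⟨z, hz, hstep⟩ := sigPred h2
          exact h1 ((stepInj ⟨j, hp1, hu2⟩ hstep) ▸ hz)
        · exact hii' (coluniq hp1 hp2)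
      · exact (Finset.disjoint_left.1 (hcol j i i' hii') ((memO w hwu hwp i j).1 hw))
          ((memO w hwu hwp i' j).1 hw')

private lemma haggkvist_aux {k n : ℕ} {A : Matrix (Fin k) (Fin n) ℕ} {d : Fin k → ℕ}
    {S : Fin k → Fin n → Finset ℕ} (hS : SeqColoring A d S) :
    ∀ (N : ℕ) (L : Fin k → Finset ℕ), (∑ i, ∑ v ∈ L i, v) ≤ N →
      (∀ i, 0 ∉ L i) → (∀ i, (L i).card = d i) →
      ∃ T : Fin k → Fin n → Finset ℕ,
        (∀ i j, T i j ⊆ L i) ∧ (∀ i j, (T i j).card = A i j) ∧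
        (∀ i : Fin k, ∀ j j' : Fin n, j ≠ j' → Disjoint (T i j) (T i j')) ∧
        (∀ j : Fin n, ∀ i i' : Fin k, i ≠ i' → Disjoint (T i j) (T i' j)) := by
  classical
  obtain ⟨hScard, hScol, hSrow, hSun⟩ := hS
  have base : ∀ L : Fin k → Finset ℕ, (∀ i, L i = Finset.Icc 1 (d i)) →
      ∃ T : Fin k → Fin n → Finset ℕ,
        (∀ i j, T i j ⊆ L i) ∧ (∀ i j, (T i j).card = A i j) ∧
        (∀ i : Fin k, ∀ j j' : Fin n, j ≠ j' → Disjoint (T i j) (T i j')) ∧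
        (∀ j : Fin n, ∀ i i' : Fin k, i ≠ i' → Disjoint (T i j) (T i' j)) := by
    intro L hcan
    refine ⟨S, ?_, hScard, hSrow, hScol⟩
    intro i j
    rw [hcan i, ← hSun i]
    exact Finset.subset_biUnion_of_mem _ (Finset.mem_univ j)
  intro N
  induction N with
  | zero =>
    intro L hle h0 hcard
    by_cases hcan : ∀ i, L i = Finset.Icc 1 (d i)
    · exact base L hcan
    · exfalso
      push_neg at hcan
      obtain ⟨i₀, hi₀⟩ := hcan
      obtain ⟨v, hv, h2, _⟩ := exists_gap (h0 i₀) (by rw [hcard i₀]; exact hi₀)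
      have hv1 : v ≤ ∑ w ∈ L i₀, w :=
        Finset.single_le_sum (f := fun w => w) (fun _ _ => Nat.zero_le _) hv
      have hv2 : (∑ w ∈ L i₀, w) ≤ ∑ i, ∑ w ∈ L i, w :=
        Finset.single_le_sum (f := fun i => ∑ w ∈ L i, w) (fun _ _ => Nat.zero_le _) (Finset.mem_univ i₀)
      omega
  | succ N ih =>
    intro L hle h0 hcard
    by_cases hcan : ∀ i, L i = Finset.Icc 1 (d i)
    · exact base L hcan
    · push_neg at hcan
      obtain ⟨i₀, hi₀⟩ := hcan
      have hgap₀ : ∃ v ∈ L i₀, 2 ≤ v ∧ v - 1 ∉ L i₀ :=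
        exists_gap (h0 i₀) (by rw [hcard i₀]; exact hi₀)
      set gaps : Finset ℕ :=
        Finset.univ.biUnion (fun i => (L i).filter (fun v => 2 ≤ v ∧ v - 1 ∉ L i)) with hgapsdef
      have hne : gaps.Nonempty := by
        obtain ⟨v, hv, h2, h3⟩ := hgap₀
        exact ⟨v, Finset.mem_biUnion.2 ⟨i₀, Finset.mem_univ _, Finset.mem_filter.2 ⟨hv, h2, h3⟩⟩⟩
      set u := gaps.max' hne with hu
      obtain ⟨iu, _, hiu⟩ := Finset.mem_biUnion.1 (gaps.max'_mem hne)
      rw [Finset.mem_filter] at hiu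
      have hu2 : 2 ≤ u := hiu.2.1
      set R := Finset.univ.filter (fun i => u ∈ L i ∧ u - 1 ∉ L i) with hR
      have hRiu : iu ∈ R := Finset.mem_filter.2 ⟨Finset.mem_univ _, hiu.1, hiu.2.2⟩
      have hmemR : ∀ i ∈ R, u ∈ L i ∧ u - 1 ∉ L i := fun i hi => (Finset.mem_filter.1 hi).2
      set L' := fun i => if i ∈ R then insert (u - 1) ((L i).erase u) else L i with hL'
      have h0' : ∀ i, 0 ∉ L' i := by
        intro i
        simp only [hL']
        split_ifs with hi
        · intro hmem
          rcases Finset.mem_insert.1 hmem with h | h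
          · omega
          · exact h0 i (Finset.mem_of_mem_erase h)
        · exact h0 i
      have hcard' : ∀ i, (L' i).card = d i := by
        intro i
        simp only [hL']
        split_ifs with hi
        · obtain ⟨hui, hu1i⟩ := hmemR i hi
          rw [Finset.card_insert_of_notMem (fun h => hu1i (Finset.mem_of_mem_erase h)),
            Finset.card_erase_of_mem hui]
          have h1 : 1 ≤ (L i).card := Finset.card_pos.2 ⟨u, hui⟩
          have h2 := hcard i
          omega
        · exact hcard i
      have hsum : ∀ i ∈ R, (∑ v ∈ L' i, v) + 1 = ∑ v ∈ L i, v := by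
        intro i hi
        obtain ⟨hui, hu1i⟩ := hmemR i hi
        simp only [hL', if_pos hi]
        rw [Finset.sum_insert (fun h => hu1i (Finset.mem_of_mem_erase h))]
        rw [← Finset.add_sum_erase (L i) (fun v => v) hui]
        omega
      have hlt : (∑ i, ∑ v ∈ L' i, v) < ∑ i, ∑ v ∈ L i, v := by
        apply Finset.sum_lt_sum
        · intro i _
          by_cases hi : i ∈ R
          · have := hsum i hi; omega
          · simp only [hL', if_neg hi]
            exact le_rfl
        · exact ⟨iu, Finset.mem_univ _, by have := hsum iu hRiu; omega⟩
      obtain ⟨T', hT1, hT2, hT3, hT4⟩ := ih L' (by omega) h0' hcard'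
      have hup : u ≠ u - 1 := by omega
      have hRp : ∀ i ∈ R, u - 1 ∈ L' i := by
        intro i hi
        simp only [hL', if_pos hi]
        exact Finset.mem_insert_self _ _
      have hRu : ∀ i ∈ R, u ∉ L' i := by
        intro i hi
        simp only [hL', if_pos hi]
        intro hmem
        rcases Finset.mem_insert.1 hmem with h | h
        · omega
        · exact (Finset.mem_erase.1 h).1 rfl
      have hCH : ∀ i, i ∉ R → u ∈ L' i → u - 1 ∈ L' i := by
        intro i hi hui
        simp only [hL', if_neg hi] at hui ⊢
        rw [hR] at hi
        simp only [Finset.mem_filter, Finset.mem_univ, true_and] at hi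
        by_contra hcon
        exact hi ⟨hui, hcon⟩
      obtain ⟨T, hT1', hT2', hT3', hT4'⟩ :=
        multi_raise (A := A) (L := L') (T := T') (R := R) hup hT1 hT2 hT3 hT4 hRp hRu hCH
      have hLL : ∀ i, (if i ∈ R then insert u ((L' i).erase (u - 1)) else L' i) = L i := by
        intro i
        by_cases hi : i ∈ R
        · obtain ⟨hui, hu1i⟩ := hmemR i hi
          rw [if_pos hi]
          simp only [hL', if_pos hi]
          rw [Finset.erase_insert (fun h => hu1i (Finset.mem_of_mem_erase h)),
            Finset.insert_erase hui]
        · rw [if_neg hi]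
          simp only [hL', if_neg hi]
      exact ⟨T, fun i j => (hLL i) ▸ hT1' i j, hT2', hT3', hT4'⟩
/-- **Theorem (Häggkvist, list edge-colorings).** If the bipartite multigraph encoded
by the matrix `A` admits a sequential coloring for `X`, then it can be properly
edge-colored from any lists `L i` at the vertices `x i` with `|L i| = d i`. -/
theorem statement8 (k n : ℕ) (A : Matrix (Fin k) (Fin n) ℕ) (d : Fin k → ℕ)
    (hd : ∀ i, d i = ∑ j, A i j)
    (hseq : ∃ S : Fin k → Fin n → Finset ℕ, SeqColoring A d S)
    (L : Fin k → Finset ℕ) (hL0 : ∀ i, 0 ∉ L i) (hLcard : ∀ i, (L i).card = d i) :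
    ∃ T : Fin k → Fin n → Finset ℕ,
      (∀ i j, T i j ⊆ L i) ∧
      (∀ i j, (T i j).card = A i j) ∧
      (∀ i : Fin k, ∀ j j' : Fin n, j ≠ j' → Disjoint (T i j) (T i j')) ∧
      (∀ j : Fin n, ∀ i i' : Fin k, i ≠ i' → Disjoint (T i j) (T i' j)) := by
  obtain ⟨S, hS⟩ := hseq
  exact haggkvist_aux hS (∑ i, ∑ v ∈ L i, v) L le_rfl hL0 hLcard
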